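/- Suppose a measurable kernel \(P_s(u,v)\ge 0\) on \(\mathbb{H}^n\times\mathbb{H}^n\) satisfies, for some constants \(C_N,A>0\) and \(N\ge 1\), the bound \(P_s(u,v) \le C_N s^{-Q/2}\exp(-|v^{-1}u|^2/(As))(1+\sqrt{s}/\rho(u))^{-N}\) for all \(s>0\), where \(\rho:\mathbb{H}^n\to(0,\infty)\). Then for \(0<\alpha<Q\) the kernel \(\mathcal K_\alpha(u,v) = \frac{1}{\Gamma(\alpha/2)}\int_0^\infty P_s(u,v)\, s^{\alpha/2-1}\,ds\) satisfies \(|\mathcal K_\alpha(u,v)| \le C_{N,\alpha}\left(1+\frac{|v^{-1}u|}{\rho(u)}\right)^{-N}\frac{1}{|v^{-1}u|^{Q-\alpha}}\) for all \(u\ne v\). -/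

import Mathlib

open MeasureTheory Real Set

noncomputable section

abbrev Heis (n : ℕ) := (Fin n → ℂ) × ℝ

def Hmul {n : ℕ} (u v : Heis n) : Heis n :=
  (u.1 + v.1, u.2 + v.2 + 2 * (∑ j, u.1 j * (starRingEnd ℂ) (v.1 j)).im)

def Hinv {n : ℕ} (u : Heis n) : Heis n := (-u.1, -u.2)

/-- The homogeneous norm `|(z,t)| = (|z|⁴ + t²)^{1/4}`, with `|z|` the Euclidean norm. -/
def Hnorm {n : ℕ} (u : Heis n) : ℝ :=
  ((∑ j, ‖u.1 j‖ ^ 2) ^ 2 + u.2 ^ 2) ^ ((1 : ℝ) / 4)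

def Hball {n : ℕ} (u₀ : Heis n) (r : ℝ) : Set (Heis n) :=
  {v | Hnorm (Hmul (Hinv v) u₀) < r}

lemma exp_neg_le_aux (r : ℝ) (hr : 0 < r) {x : ℝ} (hx : 0 < x) :
    Real.exp (-x) ≤ r ^ r * x ^ (-r) := by
  have hxr : (0:ℝ) < x ^ r := Real.rpow_pos_of_pos hx r
  have h2 : x / r ≤ Real.exp (x / r) := by linarith [Real.add_one_le_exp (x / r)]
  have h3 : x ≤ r * Real.exp (x / r) := by
    rw [div_le_iff₀ hr] at h2; linarith [h2, mul_comm r (Real.exp (x / r))]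
  have h1 : x ^ r ≤ r ^ r * Real.exp x := by
    calc x ^ r ≤ (r * Real.exp (x / r)) ^ r :=
          Real.rpow_le_rpow hx.le h3 hr.le
      _ = r ^ r * Real.exp (x / r) ^ r := Real.mul_rpow hr.le (Real.exp_pos _).le
      _ = r ^ r * Real.exp x := by rw [← Real.exp_mul, div_mul_cancel₀ _ hr.ne']
  rw [Real.exp_neg, Real.rpow_neg hx.le]
  rw [inv_eq_one_div, inv_eq_one_div, mul_one_div, div_le_div_iff₀ (Real.exp_pos _) hxr]
  calc 1 * x ^ r = x ^ r := one_mul _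
    _ ≤ r ^ r * Real.exp x := h1

lemma g_cont (p N A : ℝ) (hA : 0 < A) :
    ContinuousOn (fun t : ℝ => t ^ (p - 1) *
      ((1 + 1 / Real.sqrt t) ^ N * Real.exp (-(1 / (A * t))))) (Ioi (0:ℝ)) := by
  apply ContinuousOn.mul
  · exact continuousOn_id.rpow_const fun t ht => Or.inl (ne_of_gt ht)
  apply ContinuousOn.mul
  · apply ContinuousOn.rpow_const
    · exact continuousOn_const.add (continuousOn_const.div
        Real.continuous_sqrt.continuousOn
        fun t ht => (Real.sqrt_pos.mpr ht).ne')
    · intro t ht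
      have : 0 < 1 + 1 / Real.sqrt t := by positivity
      exact Or.inl this.ne'
  · apply Real.continuous_exp.comp_continuousOn
    exact (continuousOn_const.div (continuousOn_const.mul continuousOn_id)
      fun t ht => (mul_pos hA (mem_Ioi.mp ht)).ne').neg

lemma g_int (p N A : ℝ) (hp : p < 0) (hN : 0 ≤ N) (hA : 0 < A) :
    IntegrableOn (fun t : ℝ => t ^ (p - 1) *
      ((1 + 1 / Real.sqrt t) ^ N * Real.exp (-(1 / (A * t))))) (Ioi (0:ℝ)) := by
  set g : ℝ → ℝ := fun t => t ^ (p - 1) *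
      ((1 + 1 / Real.sqrt t) ^ N * Real.exp (-(1 / (A * t)))) with hg
  have hgcont := g_cont p N A hA
  rw [← Ioc_union_Ioi_eq_Ioi (zero_le_one (α := ℝ))]
  set m : ℝ := max 1 (N / 2 + 1 - p) with hm
  have hm0 : 0 < m := lt_of_lt_of_le one_pos (le_max_left _ _)
  have hmge : N / 2 + 1 - p ≤ m := le_max_right _ _
  apply IntegrableOn.union
  · -- Ioc 0 1 : bounded by a constant
    apply Integrable.mono' (g := fun _ : ℝ => (2:ℝ) ^ N * (m ^ m * A ^ m))
    · exact (integrableOn_const_iff).mpr (Or.inr measure_Ioc_lt_top)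
    · exact (hgcont.mono Ioc_subset_Ioi_self).aestronglyMeasurable measurableSet_Ioc
    · rw [ae_restrict_iff' measurableSet_Ioc]
      refine Filter.Eventually.of_forall fun t ht => ?_
      obtain ⟨ht0, ht1⟩ := ht
      have hsq : 0 < Real.sqrt t := Real.sqrt_pos.mpr ht0
      have hsle : Real.sqrt t ≤ 1 := by
        rw [show (1:ℝ) = Real.sqrt 1 by simp]
        exact Real.sqrt_le_sqrt ht1
      have hb1 : (1 + 1 / Real.sqrt t) ^ N ≤ (2 / Real.sqrt t) ^ N := by
        apply Real.rpow_le_rpow (by positivity) _ hN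
        have h1 : (1:ℝ) ≤ 1 / Real.sqrt t := by
          rw [le_div_iff₀ hsq, one_mul]; exact hsle
        have h2 : (2:ℝ) / Real.sqrt t = 1 / Real.sqrt t + 1 / Real.sqrt t := by ring
        linarith
      have hb1' : (2 / Real.sqrt t) ^ N = 2 ^ N * t ^ (-(N / 2)) := by
        rw [Real.div_rpow (by norm_num) hsq.le, Real.sqrt_eq_rpow,
          ← Real.rpow_mul ht0.le, Real.rpow_neg ht0.le, div_eq_mul_inv,
          show 1 / 2 * N = N / 2 by ring]
      have hb2 : Real.exp (-(1 / (A * t))) ≤ m ^ m * (A * t) ^ m := by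
        have hAt : (0:ℝ) < A * t := by positivity
        have := exp_neg_le_aux m hm0 (x := 1 / (A * t)) (by positivity)
        rw [one_div, Real.inv_rpow hAt.le, Real.rpow_neg hAt.le, inv_inv] at this
        rwa [one_div]
      have hrp : (0:ℝ) ≤ t ^ (p - 1) := (Real.rpow_pos_of_pos ht0 _).le
      have hgt : g t = t ^ (p - 1) * ((1 + 1 / Real.sqrt t) ^ N * Real.exp (-(1 / (A * t)))) := rfl
      rw [Real.norm_eq_abs, abs_of_nonneg (by rw [hgt]; positivity), hgt]
      calc t ^ (p - 1) * ((1 + 1 / Real.sqrt t) ^ N * Real.exp (-(1 / (A * t))))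
          ≤ t ^ (p - 1) * ((2 ^ N * t ^ (-(N / 2))) * (m ^ m * (A * t) ^ m)) := by
            apply mul_le_mul_of_nonneg_left _ hrp
            exact mul_le_mul (hb1.trans_eq hb1') hb2 (Real.exp_pos _).le (by positivity)
        _ = (2 ^ N * (m ^ m * A ^ m)) * (t ^ (p - 1) * t ^ (-(N / 2)) * t ^ m) := by
            rw [Real.mul_rpow hA.le ht0.le]; ring
        _ = (2 ^ N * (m ^ m * A ^ m)) * t ^ (p - 1 + -(N / 2) + m) := by
            rw [← Real.rpow_add ht0, ← Real.rpow_add ht0]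
        _ ≤ (2 ^ N * (m ^ m * A ^ m)) * 1 := by
            apply mul_le_mul_of_nonneg_left _ (by positivity)
            exact Real.rpow_le_one ht0.le ht1 (by linarith)
        _ = 2 ^ N * (m ^ m * A ^ m) := mul_one _
  · -- Ioi 1
    apply Integrable.mono'
      (g := fun t : ℝ => (2:ℝ) ^ N * t ^ (p - 1))
    · exact (integrableOn_Ioi_rpow_of_lt (by linarith) one_pos).const_mul _
    · exact (hgcont.mono (Ioi_subset_Ioi zero_le_one)).aestronglyMeasurable measurableSet_Ioi
    · rw [ae_restrict_iff' measurableSet_Ioi]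
      refine Filter.Eventually.of_forall fun t ht => ?_
      have ht1 : (1:ℝ) < t := ht
      have ht0 : (0:ℝ) < t := lt_trans one_pos ht1
      have hsq : (1:ℝ) ≤ Real.sqrt t := by
        rw [show (1:ℝ) = Real.sqrt 1 by simp]
        exact Real.sqrt_le_sqrt ht1.le
      have h1 : (1 + 1 / Real.sqrt t) ^ N ≤ 2 ^ N := by
        apply Real.rpow_le_rpow (by positivity) _ hN
        have : 1 / Real.sqrt t ≤ 1 := by
          rw [div_le_one (by linarith)]; exact hsq
        linarith
      have h2 : Real.exp (-(1 / (A * t))) ≤ 1 := by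
        rw [Real.exp_le_one_iff]
        have : 0 ≤ 1 / (A * t) := by positivity
        linarith
      have hrp : (0:ℝ) ≤ t ^ (p - 1) := (Real.rpow_pos_of_pos ht0 _).le
      have hgt : g t = t ^ (p - 1) * ((1 + 1 / Real.sqrt t) ^ N * Real.exp (-(1 / (A * t)))) := rfl
      rw [Real.norm_eq_abs, abs_of_nonneg (by rw [hgt]; positivity)]
      rw [hgt, mul_comm ((2:ℝ) ^ N) (t ^ (p - 1))]
      apply mul_le_mul_of_nonneg_left _ hrp
      calc (1 + 1 / Real.sqrt t) ^ N * Real.exp (-(1 / (A * t)))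
          ≤ 2 ^ N * 1 := mul_le_mul h1 h2 (Real.exp_pos _).le (by positivity)
        _ = 2 ^ N := mul_one _

lemma F_eq (p N A : ℝ) (hA : 0 < A) (d : ℝ) (hd : 0 < d) {s : ℝ} (hs : 0 < s) :
    s ^ (p - 1) * ((1 + d / Real.sqrt s) ^ N * Real.exp (-(d ^ 2 / (A * s)))) =
      (d ^ 2) ^ (p - 1) * ((1 / d ^ 2 * s) ^ (p - 1) *
        ((1 + 1 / Real.sqrt (1 / d ^ 2 * s)) ^ N *
          Real.exp (-(1 / (A * (1 / d ^ 2 * s)))))) := by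
  have hd2 : (0:ℝ) < d ^ 2 := by positivity
  have hrp : ((d:ℝ) ^ 2) ^ (p - 1) ≠ 0 := (Real.rpow_pos_of_pos hd2 _).ne'
  have h1 : 1 / d ^ 2 * s = s / d ^ 2 := by ring
  rw [h1]
  have h2 : (s / d ^ 2) ^ (p - 1) = s ^ (p - 1) / (d ^ 2) ^ (p - 1) :=
    Real.div_rpow hs.le hd2.le _
  have h3 : Real.sqrt (s / d ^ 2) = Real.sqrt s / d := by
    rw [Real.sqrt_div hs.le, Real.sqrt_sq hd.le]
  have h4 : 1 / (Real.sqrt s / d) = d / Real.sqrt s := one_div_div _ _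
  have h5 : 1 / (A * (s / d ^ 2)) = d ^ 2 / (A * s) := by
    field_simp
  rw [h2, h3, h4, h5]
  field_simp

lemma F_int (p N A : ℝ) (hp : p < 0) (hN : 0 ≤ N) (hA : 0 < A) (d : ℝ) (hd : 0 < d) :
    IntegrableOn (fun s : ℝ => s ^ (p - 1) *
      ((1 + d / Real.sqrt s) ^ N * Real.exp (-(d ^ 2 / (A * s))))) (Ioi (0:ℝ)) := by
  have hd2 : (0:ℝ) < 1 / d ^ 2 := by positivity
  have h0 : IntegrableOn (fun s : ℝ => (1 / d ^ 2 * s) ^ (p - 1) *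
      ((1 + 1 / Real.sqrt (1 / d ^ 2 * s)) ^ N *
        Real.exp (-(1 / (A * (1 / d ^ 2 * s)))))) (Ioi (0:ℝ)) := by
    have := (integrableOn_Ioi_comp_mul_left_iff (fun t : ℝ => t ^ (p - 1) *
      ((1 + 1 / Real.sqrt t) ^ N * Real.exp (-(1 / (A * t))))) 0 hd2).mpr
    rw [mul_zero] at this
    exact this (g_int p N A hp hN hA)
  apply IntegrableOn.congr_fun (h0.const_mul ((d ^ 2 : ℝ) ^ (p - 1)))
    (fun s hs => (F_eq p N A hA d hd (mem_Ioi.mp hs)).symm) measurableSet_Ioi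

lemma F_integral (p N A : ℝ) (hp : p < 0) (hN : 0 ≤ N) (hA : 0 < A) (d : ℝ) (hd : 0 < d) :
    ∫ s in Ioi (0:ℝ), s ^ (p - 1) *
        ((1 + d / Real.sqrt s) ^ N * Real.exp (-(d ^ 2 / (A * s)))) =
      d ^ (2 * p) * ∫ t in Ioi (0:ℝ), t ^ (p - 1) *
        ((1 + 1 / Real.sqrt t) ^ N * Real.exp (-(1 / (A * t)))) := by
  have hd2 : (0:ℝ) < 1 / d ^ 2 := by positivity
  rw [setIntegral_congr_fun measurableSet_Ioi
    (fun s hs => F_eq p N A hA d hd (mem_Ioi.mp hs))]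
  rw [integral_const_mul]
  rw [integral_comp_mul_left_Ioi (fun t : ℝ => t ^ (p - 1) *
    ((1 + 1 / Real.sqrt t) ^ N * Real.exp (-(1 / (A * t))))) 0 hd2]
  rw [mul_zero, smul_eq_mul, ← mul_assoc]
  congr 1
  rw [one_div, inv_inv]
  rw [← Real.rpow_natCast d 2, ← Real.rpow_mul hd.le, ← Real.rpow_add hd]
  norm_num
  ring_nf

lemma one_add_div_le (a b c : ℝ) (ha : 0 ≤ a) (hb : 0 < b) (hc : 0 < c) :
    1 + a / c ≤ (1 + a / b) * (1 + b / c) := by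
  have h1 : 0 ≤ a / b := div_nonneg ha hb.le
  have h2 : 0 ≤ b / c := div_nonneg hb.le hc.le
  have h3 : a / b * (b / c) = a / c := by field_simp
  nlinarith [h1, h2, h3]

lemma inv_factor_le {d r s N : ℝ} (hd : 0 ≤ d) (hr : 0 < r) (hs : 0 < s) (hN : 0 ≤ N) :
    (1 + s / r) ^ (-N) ≤ (1 + d / s) ^ N * (1 + d / r) ^ (-N) := by
  have h1 : (0:ℝ) < 1 + s / r := by positivity
  have h2 : (0:ℝ) < 1 + d / s := by positivity
  have h3 : (0:ℝ) < 1 + d / r := by positivity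
  rw [Real.rpow_neg h1.le, Real.rpow_neg h3.le, inv_eq_one_div, inv_eq_one_div, mul_one_div,
    div_le_div_iff₀ (Real.rpow_pos_of_pos h1 N) (Real.rpow_pos_of_pos h3 N), one_mul,
    ← Real.mul_rpow h2.le h1.le]
  exact Real.rpow_le_rpow h3.le (one_add_div_le d s r hd hs hr) hN

lemma Hnorm_pos {n : ℕ} {u v : Heis n} (h : u ≠ v) : 0 < Hnorm (Hmul (Hinv v) u) := by
  set w := Hmul (Hinv v) u with hw
  apply Real.rpow_pos_of_pos
  rcases eq_or_ne u.1 v.1 with h1 | h1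
  · have h2 : u.2 ≠ v.2 := fun h2 => h (Prod.ext h1 h2)
    have hterm0 : ∀ j : Fin n, ((-u.1) j * (starRingEnd ℂ) (u.1 j)).im = 0 := by
      intro j
      simp only [Pi.neg_apply, neg_mul, Complex.neg_im, Complex.mul_conj]
      simp
    have hw2 : w.2 = u.2 - v.2 := by
      show -v.2 + u.2 + 2 * (∑ j, (-v.1) j * (starRingEnd ℂ) (u.1 j)).im = u.2 - v.2
      rw [← h1, Complex.im_sum, Finset.sum_eq_zero fun j _ => hterm0 j]
      ring
    have hne : w.2 ≠ 0 := by rw [hw2]; exact sub_ne_zero.mpr h2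
    have hpos : 0 < w.2 ^ 2 := by positivity
    have hs : (0:ℝ) ≤ (∑ j, ‖w.1 j‖ ^ 2) ^ 2 := sq_nonneg _
    linarith
  · obtain ⟨j, hj⟩ := Function.ne_iff.mp h1
    have hwj : w.1 j ≠ 0 := by
      have hwj' : w.1 j = -v.1 j + u.1 j := rfl
      rw [hwj']
      intro hz
      exact hj (by linear_combination hz)
    have hterm : 0 < ‖w.1 j‖ ^ 2 := pow_pos (norm_pos_iff.mpr hwj) 2
    have hsum : 0 < ∑ j, ‖w.1 j‖ ^ 2 :=
      Finset.sum_pos' (fun i _ => sq_nonneg _) ⟨j, Finset.mem_univ j, hterm⟩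
    have hpos : 0 < (∑ j, ‖w.1 j‖ ^ 2) ^ 2 := pow_pos hsum 2
    have h2 : (0:ℝ) ≤ w.2 ^ 2 := sq_nonneg _
    linarith

theorem schrodinger_fractional_kernel_bound (n : ℕ) (Q : ℝ) (hQ : Q = 2 * n + 2)
    (α : ℝ) (hα : 0 < α) (hαQ : α < Q)
    (ρ : Heis n → ℝ) (hρ : ∀ u, 0 < ρ u) (A : ℝ) (hA : 0 < A)
    (N : ℝ) (hN : 1 ≤ N) (CN : ℝ) (hCN : 0 < CN)
    (P : ℝ → Heis n → Heis n → ℝ)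
    (hP0 : ∀ s (u v : Heis n), 0 < s → 0 ≤ P s u v)
    (hPbound : ∀ s (u v : Heis n), 0 < s →
      P s u v ≤ CN * s ^ (-(Q / 2)) * Real.exp (-(Hnorm (Hmul (Hinv v) u)) ^ 2 / (A * s)) *
        (1 + Real.sqrt s / ρ u) ^ (-N)) :
    ∃ C > 0, ∀ u v : Heis n, u ≠ v →
      |(1 / Real.Gamma (α / 2)) * ∫ s in Ioi (0 : ℝ), P s u v * s ^ (α / 2 - 1)| ≤
        C * (1 + Hnorm (Hmul (Hinv v) u) / ρ u) ^ (-N) *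
          Hnorm (Hmul (Hinv v) u) ^ (α - Q) := by
  set p : ℝ := (α - Q) / 2 with hp'
  have hp : p < 0 := by rw [hp']; linarith
  have hN0 : (0:ℝ) ≤ N := by linarith
  set I : ℝ := ∫ t in Ioi (0:ℝ), t ^ (p - 1) *
      ((1 + 1 / Real.sqrt t) ^ N * Real.exp (-(1 / (A * t)))) with hI
  have hI0 : 0 ≤ I := by
    apply setIntegral_nonneg measurableSet_Ioi
    intro t ht
    have ht0 : 0 < t := ht
    positivity
  have hΓ : 0 < Real.Gamma (α / 2) := Real.Gamma_pos_of_pos (by linarith)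
  have hC0 : (0:ℝ) < 1 / Real.Gamma (α / 2) * CN * I + 1 := by
    have : 0 ≤ 1 / Real.Gamma (α / 2) * CN * I :=
      mul_nonneg (mul_nonneg (by positivity) hCN.le) hI0
    linarith
  refine ⟨1 / Real.Gamma (α / 2) * CN * I + 1, hC0, fun u v huv => ?_⟩
  set d : ℝ := Hnorm (Hmul (Hinv v) u) with hdd
  have hd : 0 < d := Hnorm_pos huv
  have hρu : 0 < ρ u := hρ u
  set B : ℝ := (1 + d / ρ u) ^ (-N) with hB
  have hB0 : 0 ≤ B := Real.rpow_nonneg (by positivity) _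
  have hD0 : 0 ≤ d ^ (α - Q) := Real.rpow_nonneg hd.le _
  set F : ℝ → ℝ := fun s => s ^ (p - 1) *
      ((1 + d / Real.sqrt s) ^ N * Real.exp (-(d ^ 2 / (A * s)))) with hF
  have hFint := F_int p N A hp hN0 hA d hd
  have hFval := F_integral p N A hp hN0 hA d hd
  have hcomp : ∀ s ∈ Ioi (0:ℝ), P s u v * s ^ (α / 2 - 1) ≤ CN * B * F s := by
    intro s hs
    have hs0 : 0 < s := hs
    have hsq : 0 < Real.sqrt s := Real.sqrt_pos.mpr hs0
    have h1 := hPbound s u v hs0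
    have hpow : (0:ℝ) ≤ s ^ (α / 2 - 1) := (Real.rpow_pos_of_pos hs0 _).le
    have hmulexp : s ^ (-(Q / 2)) * s ^ (α / 2 - 1) = s ^ (p - 1) := by
      rw [← Real.rpow_add hs0]
      congr 1
      rw [hp']; ring
    calc P s u v * s ^ (α / 2 - 1)
        ≤ CN * s ^ (-(Q / 2)) * Real.exp (-d ^ 2 / (A * s)) *
            (1 + Real.sqrt s / ρ u) ^ (-N) * s ^ (α / 2 - 1) :=
          mul_le_mul_of_nonneg_right h1 hpow
      _ ≤ CN * s ^ (-(Q / 2)) * Real.exp (-d ^ 2 / (A * s)) *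
            ((1 + d / Real.sqrt s) ^ N * B) * s ^ (α / 2 - 1) := by
          apply mul_le_mul_of_nonneg_right _ hpow
          apply mul_le_mul_of_nonneg_left
            (inv_factor_le hd.le hρu hsq hN0) (by positivity)
      _ = CN * B * F s := by
          rw [hF]
          simp only
          rw [← hmulexp, neg_div]
          ring
  by_cases hPint : IntegrableOn (fun s : ℝ => P s u v * s ^ (α / 2 - 1)) (Ioi 0)
  · have hInt2 : IntegrableOn (fun s : ℝ => CN * B * F s) (Ioi 0) :=
      hFint.const_mul _
    have hmono := setIntegral_mono_on hPint hInt2 measurableSet_Ioi hcomp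
    have hnn : 0 ≤ ∫ s in Ioi (0:ℝ), P s u v * s ^ (α / 2 - 1) := by
      apply setIntegral_nonneg measurableSet_Ioi
      intro s hs
      exact mul_nonneg (hP0 s u v hs) (Real.rpow_pos_of_pos hs _).le
    rw [abs_of_nonneg (mul_nonneg (by positivity) hnn)]
    have hval2 : ∫ s in Ioi (0:ℝ), CN * B * F s = CN * B * (d ^ (2 * p) * I) := by
      rw [integral_const_mul, hFval]
    have h2p : d ^ (2 * p) = d ^ (α - Q) := by
      congr 1
      rw [hp']; ring
    calc 1 / Real.Gamma (α / 2) * ∫ s in Ioi (0:ℝ), P s u v * s ^ (α / 2 - 1)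
        ≤ 1 / Real.Gamma (α / 2) * (CN * B * (d ^ (α - Q) * I)) := by
          apply mul_le_mul_of_nonneg_left _ (by positivity)
          rw [← h2p, ← hval2]
          exact hmono
      _ = (1 / Real.Gamma (α / 2) * CN * I) * B * d ^ (α - Q) := by ring
      _ ≤ (1 / Real.Gamma (α / 2) * CN * I + 1) * B * d ^ (α - Q) := by
          have hBD : 0 ≤ B * d ^ (α - Q) := mul_nonneg hB0 hD0
          nlinarith [hBD]
  · rw [MeasureTheory.integral_undef hPint]
    rw [mul_zero, abs_zero]
    exact mul_nonneg (mul_nonneg hC0.le hB0) hD0
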